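/- Let j be a positive integer with j ≡ 3 or j ≡ 15 modulo 18 (i.e., j ≡ ±3 mod 18), and let x, y, d, n be integers with n ≥ 2 and gcd(x,d) = 1. If Σ_{i=0}^{j-1} (x + i·d)^5 = y^n, then 3 does not divide d and 3 divides y. -/

import Mathlib

open Finset

private lemma per_aux_19 {R : Type} [CommRing R] (a b : R)
    (h : ∀ c : R, ∑ i ∈ range 18, (a + (c + (i : R)) * b) ^ 5 = 0) (j : ℕ) :
    ∑ i ∈ range j, (a + (i : R) * b) ^ 5 = ∑ i ∈ range (j % 18), (a + (i : R) * b) ^ 5 := by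
  have key : ∀ q r : ℕ, ∑ i ∈ range (18 * q + r), (a + (i : R) * b) ^ 5
      = ∑ i ∈ range r, (a + (i : R) * b) ^ 5 := by
    intro q r
    induction q with
    | zero => simp
    | succ q ih =>
      have h18 : 18 * (q + 1) + r = (18 * q + r) + 18 := by ring
      rw [h18, Finset.sum_range_add, ih]
      have h2 : ∑ i ∈ range 18, (a + (((18 * q + r) + i : ℕ) : R) * b) ^ 5 = 0 := by
        simp only [Nat.cast_add]
        exact h _
      rw [h2, add_zero]
  have := key (j / 18) (j % 18)
  rwa [Nat.div_add_mod] at this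

private lemma z3_19 : ∀ a b c : ZMod 3,
    ∑ i ∈ range 18, (a + (c + (i : ZMod 3)) * b) ^ 5 = 0 := by decide

private lemma s3_19 : ∀ a b : ZMod 3,
    (∑ i ∈ range 3, (a + (i : ZMod 3) * b) ^ 5 = 0) ∧
    (∑ i ∈ range 15, (a + (i : ZMod 3) * b) ^ 5 = 0) := by decide

set_option maxHeartbeats 2000000 in
private lemma z9_19 : ∀ a b c : ZMod 9,
    ∑ i ∈ range 18, (a + (c + (i : ZMod 9)) * b) ^ 5 = 0 := by decide

set_option maxHeartbeats 1000000 in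
private lemma s9_19 : ∀ a b : ZMod 9,
    ZMod.castHom (by norm_num : (3:ℕ) ∣ 9) (ZMod 3) b = 0 →
    ZMod.castHom (by norm_num : (3:ℕ) ∣ 9) (ZMod 3) a ≠ 0 →
    (∑ i ∈ range 3, (a + (i : ZMod 9) * b) ^ 5 ≠ 0) ∧
    (∑ i ∈ range 15, (a + (i : ZMod 9) * b) ^ 5 ≠ 0) := by decide

theorem stmt_19 (j : ℕ) (hj : 0 < j) (hjmod : j % 18 = 3 ∨ j % 18 = 15)
    (x y d : ℤ) (n : ℕ) (hn : 2 ≤ n) (hgcd : Int.gcd x d = 1)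
    (heq : ∑ i ∈ Finset.range j, (x + (i : ℤ) * d) ^ 5 = y ^ n) :
    ¬ (3 ∣ d) ∧ 3 ∣ y := by
  have hn0 : n ≠ 0 := by omega
  -- mod 3
  have h3 : ∑ i ∈ range (j % 18), ((x : ZMod 3) + (i : ZMod 3) * (d : ZMod 3)) ^ 5
      = (y : ZMod 3) ^ n := by
    have hc := congrArg (fun t : ℤ => (t : ZMod 3)) heq
    push_cast at hc
    rw [per_aux_19 (x : ZMod 3) (d : ZMod 3) (fun c => z3_19 _ _ c) j] at hc
    exact hc
  have hy3 : (3 : ℤ) ∣ y := by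
    have h0 : (y : ZMod 3) ^ n = 0 := by
      rcases hjmod with h | h <;> rw [h] at h3
      · rw [← h3]; exact (s3_19 (x : ZMod 3) (d : ZMod 3)).1
      · rw [← h3]; exact (s3_19 (x : ZMod 3) (d : ZMod 3)).2
    have : (y : ZMod 3) = 0 := pow_eq_zero_iff hn0 |>.mp h0
    exact_mod_cast (ZMod.intCast_zmod_eq_zero_iff_dvd y 3).mp this
  refine ⟨?_, hy3⟩
  intro hd3
  have hx3 : ¬ (3 : ℤ) ∣ x := by
    intro hx
    have h1 : (3 : ℤ) ∣ (Int.gcd x d : ℤ) := Int.dvd_coe_gcd hx hd3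
    rw [hgcd] at h1
    norm_num at h1
  -- 9 ∣ y^n
  have h9yn : (9 : ℤ) ∣ y ^ n := by
    obtain ⟨k, rfl⟩ := hy3
    have h1 : (9 : ℤ) ∣ (3 * k) ^ 2 := ⟨k ^ 2, by ring⟩
    exact dvd_trans h1 (pow_dvd_pow (3 * k) hn)
  -- mod 9
  have h9 : ∑ i ∈ range (j % 18), ((x : ZMod 9) + (i : ZMod 9) * (d : ZMod 9)) ^ 5 = 0 := by
    have hc := congrArg (fun t : ℤ => (t : ZMod 9)) heq
    push_cast at hc
    rw [per_aux_19 (x : ZMod 9) (d : ZMod 9) (fun c => z9_19 _ _ c) j] at hc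
    rw [hc]
    have : ((y ^ n : ℤ) : ZMod 9) = 0 := by
      rw [ZMod.intCast_zmod_eq_zero_iff_dvd]
      exact_mod_cast h9yn
    push_cast at this
    exact this
  have hb : ZMod.castHom (by norm_num : (3:ℕ) ∣ 9) (ZMod 3) ((d : ZMod 9)) = 0 := by
    rw [map_intCast]
    rw [ZMod.intCast_zmod_eq_zero_iff_dvd]
    exact_mod_cast hd3
  have ha : ZMod.castHom (by norm_num : (3:ℕ) ∣ 9) (ZMod 3) ((x : ZMod 9)) ≠ 0 := by
    rw [map_intCast]
    intro h
    rw [ZMod.intCast_zmod_eq_zero_iff_dvd] at h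
    exact hx3 (by exact_mod_cast h)
  rcases hjmod with h | h <;> rw [h] at h9
  · exact (s9_19 (x : ZMod 9) (d : ZMod 9) hb ha).1 h9
  · exact (s9_19 (x : ZMod 9) (d : ZMod 9) hb ha).2 h9
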